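/- Let Q be an n×n symmetric positive definite matrix, λ > 0, and let H, Ĥ be n×n symmetric positive semidefinite matrices. Set Γ = (λ² Q⁻¹ + H)⁻¹ and Γ̂ = (λ² Q⁻¹ + Ĥ)⁻¹. Then ‖Γ − Γ̂‖_F ≤ λ⁻⁴ ω ‖Q‖₂, where ω = ‖Q^{1/2}(H − Ĥ)Q^{1/2}‖_F and Q^{1/2} is the symmetric positive definite square root of Q. -/

import Mathlib

set_option maxHeartbeats 1000000
set_option synthInstance.maxHeartbeats 400000

open Matrix

noncomputable def frobNorm {n : ℕ} (M : Matrix (Fin n) (Fin n) ℝ) : ℝ :=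
  Real.sqrt (∑ i, ∑ j, (M i j) ^ 2)

noncomputable def specNorm {n : ℕ} (M : Matrix (Fin n) (Fin n) ℝ) : ℝ :=
  ‖Matrix.toEuclideanCLM (𝕜 := ℝ) M‖

section

open scoped ComplexOrder

/-- The positive semidefinite square root of a positive semidefinite matrix
(the definition removed from Mathlib, restored with its old value). -/
noncomputable def Matrix.PosSemidef.sqrt {n 𝕜 : Type*} [Fintype n] [DecidableEq n] [RCLike 𝕜]
    {A : Matrix n n 𝕜} (hA : A.PosSemidef) : Matrix n n 𝕜 :=
  hA.1.eigenvectorUnitary.1 * Matrix.diagonal ((↑) ∘ (Real.sqrt ·) ∘ hA.1.eigenvalues) *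
    (star hA.1.eigenvectorUnitary : Matrix n n 𝕜)

lemma Matrix.PosSemidef.sqrt_isHermitian' {n : ℕ} {A : Matrix (Fin n) (Fin n) ℝ}
    (hA : A.PosSemidef) : hA.sqrt.IsHermitian := by
  unfold Matrix.PosSemidef.sqrt Matrix.IsHermitian
  rw [Matrix.conjTranspose_mul, Matrix.conjTranspose_mul, Matrix.diagonal_conjTranspose,
    ← Matrix.star_eq_conjTranspose, ← Matrix.star_eq_conjTranspose, star_star, Matrix.mul_assoc]
  congr 2

lemma Matrix.PosSemidef.sqrt_mul_self' {n : ℕ} {A : Matrix (Fin n) (Fin n) ℝ}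
    (hA : A.PosSemidef) : hA.sqrt * hA.sqrt = A := by
  unfold Matrix.PosSemidef.sqrt
  have hU : (star hA.1.eigenvectorUnitary : Matrix (Fin n) (Fin n) ℝ) *
      hA.1.eigenvectorUnitary.1 = 1 := Unitary.coe_star_mul_self _
  conv_rhs => rw [hA.1.spectral_theorem, Unitary.conjStarAlgAut_apply]
  have hD : Matrix.diagonal (((↑) : ℝ → ℝ) ∘ (Real.sqrt ·) ∘ hA.1.eigenvalues) *
      Matrix.diagonal (((↑) : ℝ → ℝ) ∘ (Real.sqrt ·) ∘ hA.1.eigenvalues) =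
      Matrix.diagonal (RCLike.ofReal ∘ hA.1.eigenvalues) := by
    rw [Matrix.diagonal_mul_diagonal]
    congr 1
    funext i
    simp [Real.mul_self_sqrt (hA.eigenvalues_nonneg i)]
  calc _ = hA.1.eigenvectorUnitary.1 *
        (Matrix.diagonal (((↑) : ℝ → ℝ) ∘ (Real.sqrt ·) ∘ hA.1.eigenvalues) *
        ((star hA.1.eigenvectorUnitary : Matrix (Fin n) (Fin n) ℝ) * hA.1.eigenvectorUnitary.1) *
        Matrix.diagonal (((↑) : ℝ → ℝ) ∘ (Real.sqrt ·) ∘ hA.1.eigenvalues)) *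
        (star hA.1.eigenvectorUnitary : Matrix (Fin n) (Fin n) ℝ) := by
        simp only [Matrix.mul_assoc]; rfl
    _ = _ := by rw [hU, Matrix.mul_one, hD]

end

lemma Matrix.toEuclideanCLM_piLp_equiv_symm {n : ℕ} (A : Matrix (Fin n) (Fin n) ℝ)
    (x : Fin n → ℝ) :
    Matrix.toEuclideanCLM (𝕜 := ℝ) A ((WithLp.equiv 2 (Fin n → ℝ)).symm x) =
      (WithLp.equiv 2 (Fin n → ℝ)).symm (Matrix.toLin' A x) := rfl

lemma frobNorm_nonneg {n : ℕ} (M : Matrix (Fin n) (Fin n) ℝ) : 0 ≤ frobNorm M :=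
  Real.sqrt_nonneg _

lemma specNorm_nonneg {n : ℕ} (M : Matrix (Fin n) (Fin n) ℝ) : 0 ≤ specNorm M :=
  norm_nonneg _

lemma frobNorm_neg {n : ℕ} (M : Matrix (Fin n) (Fin n) ℝ) : frobNorm (-M) = frobNorm M := by
  simp [frobNorm]

lemma frobNorm_transpose {n : ℕ} (M : Matrix (Fin n) (Fin n) ℝ) :
    frobNorm Mᵀ = frobNorm M := by
  unfold frobNorm
  rw [Finset.sum_comm]
  rfl

lemma specNorm_mul_le {n : ℕ} (M N : Matrix (Fin n) (Fin n) ℝ) :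
    specNorm (M * N) ≤ specNorm M * specNorm N := by
  unfold specNorm
  rw [_root_.map_mul]
  exact ContinuousLinearMap.opNorm_comp_le _ _

open scoped Matrix.Norms.L2Operator in
lemma specNorm_transpose {n : ℕ} (M : Matrix (Fin n) (Fin n) ℝ) :
    specNorm Mᵀ = specNorm M := by
  rw [specNorm, specNorm, ← Matrix.cstar_norm_def, ← Matrix.cstar_norm_def,
    ← Matrix.conjTranspose_eq_transpose_of_trivial, Matrix.l2_opNorm_conjTranspose]

open scoped Matrix.Norms.L2Operator in
lemma specNorm_sq_of_hermitian {n : ℕ} {S : Matrix (Fin n) (Fin n) ℝ}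
    (hS : S.IsHermitian) : specNorm (S * S) = specNorm S * specNorm S := by
  rw [specNorm, specNorm, ← Matrix.cstar_norm_def, ← Matrix.cstar_norm_def]
  nth_rewrite 1 [← hS]
  exact Matrix.l2_opNorm_conjTranspose_mul_self S

lemma euclid_norm_sq {n : ℕ} (v : Fin n → ℝ) :
    ‖(WithLp.equiv 2 (Fin n → ℝ)).symm v‖ ^ 2 = ∑ i, (v i) ^ 2 := by
  rw [EuclideanSpace.norm_eq, Real.sq_sqrt (by positivity)]
  simp [sq_abs]

lemma frobNorm_mul_le_left {n : ℕ} (M N : Matrix (Fin n) (Fin n) ℝ) :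
    frobNorm (M * N) ≤ specNorm M * frobNorm N := by
  have key : ∑ i, ∑ j, ((M * N) i j) ^ 2 ≤ (specNorm M) ^ 2 * ∑ i, ∑ j, (N i j) ^ 2 := by
    rw [Finset.sum_comm (s := Finset.univ) (t := Finset.univ)
      (f := fun i j => ((M * N) i j) ^ 2)]
    rw [Finset.sum_comm (s := Finset.univ) (t := Finset.univ)
      (f := fun i j => (N i j) ^ 2), Finset.mul_sum]
    apply Finset.sum_le_sum
    intro j _
    set v : Fin n → ℝ := fun k => N k j with hv
    have h1 : ∑ i, ((M * N) i j) ^ 2 =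
        ‖Matrix.toEuclideanCLM (𝕜 := ℝ) M ((WithLp.equiv 2 (Fin n → ℝ)).symm v)‖ ^ 2 := by
      rw [Matrix.toEuclideanCLM_piLp_equiv_symm, Matrix.toLin'_apply, euclid_norm_sq]
      refine Finset.sum_congr rfl fun i _ => ?_
      simp [Matrix.mul_apply, Matrix.mulVec, dotProduct, hv]
    have h2 := (Matrix.toEuclideanCLM (𝕜 := ℝ) M).le_opNorm
      ((WithLp.equiv 2 (Fin n → ℝ)).symm v)
    have h3 : ‖Matrix.toEuclideanCLM (𝕜 := ℝ) M ((WithLp.equiv 2 (Fin n → ℝ)).symm v)‖ ^ 2 ≤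
        (‖Matrix.toEuclideanCLM (𝕜 := ℝ) M‖ * ‖(WithLp.equiv 2 (Fin n → ℝ)).symm v‖) ^ 2 :=
      pow_le_pow_left₀ (norm_nonneg _) h2 2
    rw [mul_pow, euclid_norm_sq] at h3
    rw [h1]
    exact h3.trans (le_of_eq rfl)
  have hs : 0 ≤ specNorm M := specNorm_nonneg M
  calc frobNorm (M * N) = Real.sqrt (∑ i, ∑ j, ((M * N) i j) ^ 2) := rfl
    _ ≤ Real.sqrt ((specNorm M) ^ 2 * ∑ i, ∑ j, (N i j) ^ 2) := Real.sqrt_le_sqrt key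
    _ = specNorm M * frobNorm N := by
        rw [Real.sqrt_mul (by positivity), Real.sqrt_sq hs]; rfl

lemma frobNorm_mul_le_right {n : ℕ} (M N : Matrix (Fin n) (Fin n) ℝ) :
    frobNorm (M * N) ≤ frobNorm M * specNorm N := by
  rw [← frobNorm_transpose (M * N), Matrix.transpose_mul]
  calc frobNorm (Nᵀ * Mᵀ) ≤ specNorm Nᵀ * frobNorm Mᵀ := frobNorm_mul_le_left _ _
    _ = frobNorm M * specNorm N := by
        rw [specNorm_transpose, frobNorm_transpose, mul_comm]

lemma specNorm_inv_le {n : ℕ} (c : ℝ) (hc : 0 < c) (A : Matrix (Fin n) (Fin n) ℝ)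
    (hAU : IsUnit A.det)
    (hA : ∀ x : Fin n → ℝ, c * (x ⬝ᵥ x) ≤ x ⬝ᵥ (A *ᵥ x)) :
    specNorm A⁻¹ ≤ c⁻¹ := by
  rw [specNorm]
  apply ContinuousLinearMap.opNorm_le_bound _ (by positivity)
  intro y
  set v : Fin n → ℝ := WithLp.equiv 2 (Fin n → ℝ) y with hvdef
  set x : Fin n → ℝ := A⁻¹ *ᵥ v with hxdef
  have hy : y = (WithLp.equiv 2 (Fin n → ℝ)).symm v := rfl
  set a : EuclideanSpace ℝ (Fin n) := (WithLp.equiv 2 (Fin n → ℝ)).symm x with hadef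
  have happ : Matrix.toEuclideanCLM (𝕜 := ℝ) A⁻¹ y = a := by
    rw [hy, Matrix.toEuclideanCLM_piLp_equiv_symm, Matrix.toLin'_apply]
  have ha2 : ‖a‖ ^ 2 = x ⬝ᵥ x := by
    rw [hadef, euclid_norm_sq]
    simp [dotProduct, sq]
  have hAx : A *ᵥ x = v := by
    rw [hxdef, Matrix.mulVec_mulVec, Matrix.mul_nonsing_inv _ hAU, Matrix.one_mulVec]
  have h1 : c * (x ⬝ᵥ x) ≤ x ⬝ᵥ v := by
    have := hA x; rwa [hAx] at this
  have h2 : x ⬝ᵥ v ≤ ‖a‖ * ‖y‖ := by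
    have hcs := real_inner_le_norm a y
    have hi : inner ℝ a y = x ⬝ᵥ v := by
      rw [hy, hadef]
      simp [PiLp.inner_apply, RCLike.inner_apply, dotProduct, mul_comm]
    rwa [hi] at hcs
  rw [happ]
  rcases eq_or_lt_of_le (norm_nonneg a) with h0 | h0
  · rw [← h0]; positivity
  · rw [← ha2] at h1
    have hkey : c * ‖a‖ ≤ ‖y‖ := by nlinarith
    calc ‖a‖ = c⁻¹ * (c * ‖a‖) := by field_simp
      _ ≤ c⁻¹ * ‖y‖ := mul_le_mul_of_nonneg_left hkey (by positivity)

theorem stmt_14 {n : ℕ} (Q H Hhat : Matrix (Fin n) (Fin n) ℝ)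
    (hQ : Q.PosDef) (hH : H.PosSemidef) (hHhat : Hhat.PosSemidef)
    (l : ℝ) (hl : 0 < l)
    (Γ Γhat : Matrix (Fin n) (Fin n) ℝ)
    (hΓ : Γ = (l ^ 2 • Q⁻¹ + H)⁻¹) (hΓhat : Γhat = (l ^ 2 • Q⁻¹ + Hhat)⁻¹)
    (ω : ℝ)
    (hω : ω = frobNorm (hQ.posSemidef.sqrt * (H - Hhat) * hQ.posSemidef.sqrt)) :
    frobNorm (Γ - Γhat) ≤ (l ^ 4)⁻¹ * ω * specNorm Q := by
  set S : Matrix (Fin n) (Fin n) ℝ := hQ.posSemidef.sqrt with hSdef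
  have hSH : S.IsHermitian := hQ.posSemidef.sqrt_isHermitian'
  have hSS : S * S = Q := hQ.posSemidef.sqrt_mul_self'
  have hQdet : IsUnit Q.det := hQ.det_pos.ne'.isUnit
  have hSdet : IsUnit S.det := by
    have : S.det * S.det = Q.det := by rw [← Matrix.det_mul, hSS]
    exact isUnit_of_mul_isUnit_left (this ▸ hQdet)
  have hSiS : S⁻¹ * S = 1 := Matrix.nonsing_inv_mul _ hSdet
  have hSSi : S * S⁻¹ = 1 := Matrix.mul_nonsing_inv _ hSdet
  have hQinv : Q⁻¹ = S⁻¹ * S⁻¹ := by rw [← hSS, Matrix.mul_inv_rev]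
  set A : Matrix (Fin n) (Fin n) ℝ := l ^ 2 • (1 : Matrix (Fin n) (Fin n) ℝ) + S * H * S
    with hAdef
  set B : Matrix (Fin n) (Fin n) ℝ := l ^ 2 • (1 : Matrix (Fin n) (Fin n) ℝ) + S * Hhat * S
    with hBdef
  set D : Matrix (Fin n) (Fin n) ℝ := S * (H - Hhat) * S with hDdef
  have hSHS : (S * H * S).PosSemidef := by
    have := hH.mul_mul_conjTranspose_same S
    rwa [hSH.eq] at this
  have hSHhatS : (S * Hhat * S).PosSemidef := by
    have := hHhat.mul_mul_conjTranspose_same S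
    rwa [hSH.eq] at this
  have hl2 : (0:ℝ) < l ^ 2 := by positivity
  have quad : ∀ (P : Matrix (Fin n) (Fin n) ℝ), P.PosSemidef →
      ∀ x : Fin n → ℝ, l ^ 2 * (x ⬝ᵥ x) ≤
        x ⬝ᵥ ((l ^ 2 • (1 : Matrix (Fin n) (Fin n) ℝ) + P) *ᵥ x) := by
    intro P hP x
    have hpsd := hP.dotProduct_mulVec_nonneg x
    rw [star_trivial] at hpsd
    rw [Matrix.add_mulVec, dotProduct_add, Matrix.smul_mulVec,
      Matrix.one_mulVec, dotProduct_smul, smul_eq_mul]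
    linarith
  have hA_pd : A.PosDef := by
    refine Matrix.PosDef.of_dotProduct_mulVec_pos ?_ (fun x hx => ?_)
    · show _ = _
      rw [hAdef]
      simp only [Matrix.conjTranspose_add, Matrix.conjTranspose_smul, star_trivial,
        Matrix.conjTranspose_one, hSHS.1.eq]
    · have h1 := quad (S * H * S) hSHS x
      have h2 : 0 < x ⬝ᵥ x := by
        have := Matrix.dotProduct_star_self_pos_iff (v := x) |>.mpr hx
        rwa [star_trivial] at this
      rw [star_trivial]
      calc (0:ℝ) < l ^ 2 * (x ⬝ᵥ x) := by positivity
        _ ≤ _ := h1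
  have hB_pd : B.PosDef := by
    refine Matrix.PosDef.of_dotProduct_mulVec_pos ?_ (fun x hx => ?_)
    · show _ = _
      rw [hBdef]
      simp only [Matrix.conjTranspose_add, Matrix.conjTranspose_smul, star_trivial,
        Matrix.conjTranspose_one, hSHhatS.1.eq]
    · have h1 := quad (S * Hhat * S) hSHhatS x
      have h2 : 0 < x ⬝ᵥ x := by
        have := Matrix.dotProduct_star_self_pos_iff (v := x) |>.mpr hx
        rwa [star_trivial] at this
      rw [star_trivial]
      calc (0:ℝ) < l ^ 2 * (x ⬝ᵥ x) := by positivity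
        _ ≤ _ := h1
  have hAdet : IsUnit A.det := (Matrix.isUnit_iff_isUnit_det _).1 hA_pd.isUnit
  have hBdet : IsUnit B.det := (Matrix.isUnit_iff_isUnit_det _).1 hB_pd.isUnit
  have hAiA : A⁻¹ * A = 1 := Matrix.nonsing_inv_mul _ hAdet
  have hBBi : B * B⁻¹ = 1 := Matrix.mul_nonsing_inv _ hBdet
  -- factorization
  have hfact : ∀ (P : Matrix (Fin n) (Fin n) ℝ),
      l ^ 2 • Q⁻¹ + P = S⁻¹ * (l ^ 2 • (1 : Matrix (Fin n) (Fin n) ℝ) + S * P * S) * S⁻¹ := by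
    intro P
    rw [Matrix.mul_add, Matrix.add_mul, hQinv]
    congr 1
    · rw [Matrix.mul_smul, mul_one, Matrix.smul_mul]
    · rw [show S⁻¹ * (S * P * S) * S⁻¹ = (S⁻¹ * S) * P * (S * S⁻¹) by
          simp only [Matrix.mul_assoc], hSiS, hSSi, one_mul, mul_one]
  have hinvfact : ∀ (C : Matrix (Fin n) (Fin n) ℝ),
      (S⁻¹ * C * S⁻¹)⁻¹ = S * C⁻¹ * S := by
    intro C
    rw [Matrix.mul_inv_rev, Matrix.mul_inv_rev, Matrix.nonsing_inv_nonsing_inv _ hSdet,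
      Matrix.mul_assoc]
  have hΓS : Γ = S * A⁻¹ * S := by rw [hΓ, hfact H, hinvfact]
  have hΓhatS : Γhat = S * B⁻¹ * S := by rw [hΓhat, hfact Hhat, hinvfact]
  have hD : A - B = D := by
    rw [hAdef, hBdef, hDdef, add_sub_add_left_eq_sub, Matrix.mul_sub, Matrix.sub_mul]
  have e1 : A⁻¹ * D * B⁻¹ = B⁻¹ - A⁻¹ := by
    rw [← hD, Matrix.mul_sub, hAiA, Matrix.sub_mul, one_mul, Matrix.mul_assoc, hBBi, mul_one]
  have hdiff : Γ - Γhat = -((S * A⁻¹) * (D * (B⁻¹ * S))) := by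
    rw [hΓS, hΓhatS]
    have h : (S * A⁻¹) * (D * (B⁻¹ * S)) = S * (A⁻¹ * D * B⁻¹) * S := by
      simp only [Matrix.mul_assoc]
    rw [h, e1, Matrix.mul_sub, Matrix.sub_mul, neg_sub]
  -- norm bounds
  have iA : specNorm A⁻¹ ≤ (l ^ 2)⁻¹ := specNorm_inv_le _ hl2 A hAdet (quad _ hSHS)
  have iB : specNorm B⁻¹ ≤ (l ^ 2)⁻¹ := specNorm_inv_le _ hl2 B hBdet (quad _ hSHhatS)
  have t1 : specNorm (S * A⁻¹) ≤ specNorm S * (l ^ 2)⁻¹ :=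
    (specNorm_mul_le _ _).trans (mul_le_mul_of_nonneg_left iA (specNorm_nonneg S))
  have t2 : specNorm (B⁻¹ * S) ≤ (l ^ 2)⁻¹ * specNorm S :=
    (specNorm_mul_le _ _).trans (mul_le_mul_of_nonneg_right iB (specNorm_nonneg S))
  have hQs : specNorm S * specNorm S = specNorm Q := by
    rw [← specNorm_sq_of_hermitian hSH, hSS]
  have hωD : ω = frobNorm D := hω
  have hωnn : 0 ≤ ω := hωD ▸ frobNorm_nonneg D
  calc frobNorm (Γ - Γhat) = frobNorm ((S * A⁻¹) * (D * (B⁻¹ * S))) := by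
        rw [hdiff, frobNorm_neg]
    _ ≤ specNorm (S * A⁻¹) * frobNorm (D * (B⁻¹ * S)) := frobNorm_mul_le_left _ _
    _ ≤ (specNorm S * (l ^ 2)⁻¹) * (frobNorm D * ((l ^ 2)⁻¹ * specNorm S)) := by
        refine mul_le_mul t1 ?_ (frobNorm_nonneg _) (mul_nonneg (specNorm_nonneg S) (by positivity))
        exact (frobNorm_mul_le_right _ _).trans
          (mul_le_mul_of_nonneg_left t2 (frobNorm_nonneg D))
    _ = (l ^ 4)⁻¹ * ω * specNorm Q := by
        rw [hωD, ← hQs]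
        have h24 : ((l:ℝ) ^ 2)⁻¹ * ((l:ℝ) ^ 2)⁻¹ = ((l:ℝ) ^ 4)⁻¹ := by
          rw [← mul_inv]; ring_nf
        rw [← h24]; ring
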